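/- The function F(t) = [(1+(c+r+t)²)/(1+(c+r)(c+r+t))] · [((r+t)²+r²)/(2(2r+t)(r+t))] defined for t ≥ 0 with parameters c > 0, r > 0 satisfies F(0) = 1/2 and F′(0) = −(1+c²−r²)/(4r(1+(c+r)²)). -/

import Mathlib

/-- `F(0) = 1/2` and `F'(0) = -(1+c²-r²)/(4r(1+(c+r)²))` for
`F(t) = [(1+(c+r+t)²)/(1+(c+r)(c+r+t))] · [((r+t)²+r²)/(2(2r+t)(r+t))]`. -/
theorem stmt_13 (c r : ℝ) (hc : 0 < c) (hr : 0 < r) :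
    (fun t : ℝ =>
        ((1 + (c + r + t) ^ 2) / (1 + (c + r) * (c + r + t))) *
          (((r + t) ^ 2 + r ^ 2) / (2 * (2 * r + t) * (r + t)))) 0 = 1 / 2 ∧
    HasDerivAt
      (fun t : ℝ =>
        ((1 + (c + r + t) ^ 2) / (1 + (c + r) * (c + r + t))) *
          (((r + t) ^ 2 + r ^ 2) / (2 * (2 * r + t) * (r + t))))
      (-(1 + c ^ 2 - r ^ 2) / (4 * r * (1 + (c + r) ^ 2))) 0 := by
  have hcr : (0:ℝ) < 1 + (c + r) ^ 2 := by positivity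
  have hB0 : (1 : ℝ) + (c + r) * (c + r + 0) ≠ 0 := by
    simp only [add_zero]; nlinarith
  have hD0 : (2 * (2 * r + 0) * (r + 0) : ℝ) ≠ 0 := by
    simp only [add_zero]; positivity
  constructor
  · simp only [add_zero]
    have hB' : (0:ℝ) < 1 + (c + r) * (c + r) := by nlinarith
    rw [div_mul_div_comm, div_eq_div_iff (by positivity) (by positivity)]
    ring
  · have hid : HasDerivAt (fun t : ℝ => t) 1 0 := hasDerivAt_id 0
    have ht : HasDerivAt (fun t : ℝ => c + r + t) 1 0 := hid.const_add (c + r)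
    have hA : HasDerivAt (fun t : ℝ => 1 + (c + r + t) ^ 2) (2 * (c + r)) 0 := by
      have := (ht.pow 2).const_add 1
      simpa using this
    have hB : HasDerivAt (fun t : ℝ => 1 + (c + r) * (c + r + t)) (c + r) 0 := by
      have := (ht.const_mul (c + r)).const_add 1
      simpa using this
    have hC : HasDerivAt (fun t : ℝ => (r + t) ^ 2 + r ^ 2) (2 * r) 0 := by
      have := ((hid.const_add r).pow 2).add_const (r ^ 2)
      simpa using this
    have hD : HasDerivAt (fun t : ℝ => 2 * (2 * r + t) * (r + t)) (6 * r) 0 := by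
      have := ((hid.const_add (2 * r)).const_mul 2).mul (hid.const_add r)
      refine this.congr_deriv ?_
      ring
    have h1 := (hA.div hB hB0)
    have h2 := (hC.div hD hD0)
    have h := h1.mul h2
    refine h.congr_deriv ?_
    simp only [add_zero, Pi.div_apply]
    have hB' : (0:ℝ) < 1 + (c + r) * (c + r) := by nlinarith
    field_simp
    ring
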